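/- If a family of structures 𝔎 = {B_i : i ∈ ℕ} is such that each B_i is uniquely distinguished within 𝔎 by a sentence of the form ∃x̄ (α(x̄) ∧ ⋀_{j∈J} ∀ȳ ¬β_j(x̄,ȳ)) with α and each β_j positive atomic (a Σᵖ₂ sentence), then 𝔎 is TxtEx-learnable. -/

import Mathlib

/-- A structure with domain `⊆ ℕ` over the countable relational signature with relation
symbols indexed by `ℕ`, where symbol `s` has arity `arity s` (the signature also
implicitly contains `=` and `≠`, treated as logical symbols in the diagram). -/
structure Str (arity : ℕ → ℕ) where
  dom : Set ℕ
  rel : ∀ s : ℕ, (Fin (arity s) → ℕ) → Prop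
  rel_dom : ∀ s t, rel s t → ∀ k, t k ∈ dom

/-- Code of the positive atomic diagram of `S`: codes of the true atomic sentences
`R_s(ā)` (tag 0), `a = a` (tag 1) and `a ≠ b` (tag 2) with parameters in the domain. -/
def posDiag {arity : ℕ → ℕ} (S : Str arity) : Set ℕ :=
  {c | ∃ s t, S.rel s t ∧
      c = Nat.pair 0 (Nat.pair s (Encodable.encode (List.ofFn t)))} ∪
    {c | ∃ a ∈ S.dom, c = Nat.pair 1 a} ∪
    {c | ∃ a ∈ S.dom, ∃ b ∈ S.dom, a ≠ b ∧ c = Nat.pair 2 (Nat.pair a b)}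

/-- Isomorphism of structures. -/
def Iso {arity : ℕ → ℕ} (S T : Str arity) : Prop :=
  ∃ g : ℕ → ℕ, Set.BijOn g S.dom T.dom ∧
    ∀ (s : ℕ) (t : Fin (arity s) → ℕ), (∀ k, t k ∈ S.dom) →
      (S.rel s t ↔ T.rel s (fun k => g (t k)))

/-- Positive atomic formulas with variables from `V`: relational atoms `R_s(x̄)`,
equality atoms `x = y` and (positive) inequality atoms `x ≠ y`. -/
inductive PAtom (arity : ℕ → ℕ) (V : Type) where
  | rel (s : ℕ) (t : Fin (arity s) → V)
  | eq (x y : V)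
  | ne (x y : V)

/-- Satisfaction of a positive atomic formula in `S` under the assignment `v`. -/
def PAtom.Sat {arity : ℕ → ℕ} {V : Type} (S : Str arity) (v : V → ℕ) :
    PAtom arity V → Prop
  | .rel s t => S.rel s (fun k => v (t k))
  | .eq x y => v x ∈ S.dom ∧ v x = v y
  | .ne x y => v x ∈ S.dom ∧ v y ∈ S.dom ∧ v x ≠ v y

/-- The first `n` values of `f` as a list (`f↾n`). -/
def initSeg (f : ℕ → ℕ) (n : ℕ) : List ℕ := (List.range n).map f

/-- A Σᵖ₂ sentence of the form `∃x̄ (α(x̄) ∧ ⋀_{j∈J} ∀ȳ_j ¬β_j(x̄, ȳ_j))` with `α` and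
each `β_j` positive atomic; the countable index set `J` is modelled by a partial
`ℕ`-indexed family (`none` entries are skipped). -/
structure SigmaP2 (arity : ℕ → ℕ) where
  m : ℕ
  α : PAtom arity (Fin m)
  β : ℕ → Option (Σ k : ℕ, PAtom arity (Fin m ⊕ Fin k))

/-- Satisfaction of a Σᵖ₂ sentence (all quantifiers range over the domain). -/
def SigmaP2.Sat {arity : ℕ → ℕ} (S : Str arity) (ψ : SigmaP2 arity) : Prop :=
  ∃ v : Fin ψ.m → ℕ, (∀ idx, v idx ∈ S.dom) ∧ PAtom.Sat S v ψ.α ∧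
    ∀ (j k : ℕ) (b : PAtom arity (Fin ψ.m ⊕ Fin k)), ψ.β j = some ⟨k, b⟩ →
      ∀ w : Fin k → ℕ, (∀ x, w x ∈ S.dom) → ¬ PAtom.Sat S (Sum.elim v w) b

namespace Stmt14

variable {arity : ℕ → ℕ}

lemma pair1_mem (S : Str arity) {a : ℕ} (ha : a ∈ S.dom) : Nat.pair 1 a ∈ posDiag S :=
  Or.inl (Or.inr ⟨a, ha, rfl⟩)

lemma pair1_mem_iff (S : Str arity) (a : ℕ) : Nat.pair 1 a ∈ posDiag S ↔ a ∈ S.dom := by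
  constructor
  · rintro ((⟨s, t, _, hc⟩ | ⟨b, hb, hc⟩) | ⟨b, hb, c, hc', _, hc⟩)
    · exact absurd (Nat.pair_eq_pair.mp hc).1 (by norm_num)
    · rw [(Nat.pair_eq_pair.mp hc).2]; exact hb
    · exact absurd (Nat.pair_eq_pair.mp hc).1 (by norm_num)
  · exact pair1_mem S

lemma pair2_mem_iff (S : Str arity) (a b : ℕ) :
    Nat.pair 2 (Nat.pair a b) ∈ posDiag S ↔ (a ∈ S.dom ∧ b ∈ S.dom ∧ a ≠ b) := by
  constructor
  · rintro ((⟨s, t, _, hc⟩ | ⟨x, hx, hc⟩) | ⟨x, hx, y, hy, hxy, hc⟩)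
    · exact absurd (Nat.pair_eq_pair.mp hc).1 (by norm_num)
    · exact absurd (Nat.pair_eq_pair.mp hc).1 (by norm_num)
    · obtain ⟨-, h2⟩ := Nat.pair_eq_pair.mp hc
      obtain ⟨h3, h4⟩ := Nat.pair_eq_pair.mp h2
      subst h3; subst h4; exact ⟨hx, hy, hxy⟩
  · rintro ⟨ha, hb, hab⟩; exact Or.inr ⟨a, ha, b, hb, hab, rfl⟩

lemma pair0_mem_iff (S : Str arity) (s : ℕ) (t : Fin (arity s) → ℕ) :
    Nat.pair 0 (Nat.pair s (Encodable.encode (List.ofFn t))) ∈ posDiag S ↔ S.rel s t := by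
  constructor
  · rintro ((⟨s', t', hr, hc⟩ | ⟨x, hx, hc⟩) | ⟨x, hx, y, hy, hxy, hc⟩)
    · obtain ⟨-, h2⟩ := Nat.pair_eq_pair.mp hc
      obtain ⟨h3, h4⟩ := Nat.pair_eq_pair.mp h2
      subst h3
      have := Encodable.encode_injective h4
      have ht : t' = t := List.ofFn_injective this.symm
      subst ht; exact hr
    · exact absurd (Nat.pair_eq_pair.mp hc).1 (by norm_num)
    · exact absurd (Nat.pair_eq_pair.mp hc).1 (by norm_num)
  · intro hr; exact Or.inl (Or.inl ⟨s, t, hr, rfl⟩)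

/-- The single diagram code certifying a ground positive atom. -/
def atomSeen (σ : List ℕ) {V : Type} (v : V → ℕ) : PAtom arity V → Prop
  | .rel s t => Nat.pair 0 (Nat.pair s (Encodable.encode (List.ofFn fun k => v (t k)))) ∈ σ
  | .eq x y => v x = v y ∧ Nat.pair 1 (v x) ∈ σ
  | .ne x y => v x ≠ v y ∧ Nat.pair 2 (Nat.pair (v x) (v y)) ∈ σ

lemma atomSeen_sat (S : Str arity) (σ : List ℕ) (hσ : ∀ c ∈ σ, c ∈ posDiag S)
    {V : Type} (v : V → ℕ) (a : PAtom arity V) (hs : atomSeen σ v a) : PAtom.Sat S v a := by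
  cases a with
  | rel s t =>
      have := hσ _ hs
      exact (pair0_mem_iff S s _).mp this
  | eq x y =>
      obtain ⟨hxy, hm⟩ := hs
      exact ⟨(pair1_mem_iff S _).mp (hσ _ hm), hxy⟩
  | ne x y =>
      obtain ⟨hxy, hm⟩ := hs
      obtain ⟨h1, h2, h3⟩ := (pair2_mem_iff S _ _).mp (hσ _ hm)
      exact ⟨h1, h2, h3⟩

lemma sat_code (S : Str arity) {V : Type} (v : V → ℕ) (a : PAtom arity V)
    (hs : PAtom.Sat S v a) : ∃ c ∈ posDiag S, ∀ σ : List ℕ, c ∈ σ → atomSeen σ v a := by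
  cases a with
  | rel s t =>
      exact ⟨_, (pair0_mem_iff S s _).mpr hs, fun σ hc => hc⟩
  | eq x y =>
      obtain ⟨hd, hxy⟩ := hs
      exact ⟨_, pair1_mem S hd, fun σ hc => ⟨hxy, hc⟩⟩
  | ne x y =>
      obtain ⟨h1, h2, h3⟩ := hs
      exact ⟨_, (pair2_mem_iff S _ _).mpr ⟨h1, h2, h3⟩, fun σ hc => ⟨h3, hc⟩⟩


open Filter

def decodeTup (m vc : ℕ) : Option (Fin m → ℕ) :=
  (Encodable.decode (α := List ℕ) vc).bind fun l =>
    if h : l.length = m then some (fun k => l.get (Fin.cast h.symm k)) else none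

lemma decodeTup_encode (m : ℕ) (v : Fin m → ℕ) :
    decodeTup m (Encodable.encode (List.ofFn v)) = some v := by
  unfold decodeTup
  rw [Encodable.encodek]
  simp only [Option.bind_some]
  rw [dif_pos (List.length_ofFn (f := v))]
  congr 1
  funext k
  simp [List.get_ofFn]

/-- Learner's consistency check for candidate `p = ⟨i, code of v̄⟩` against data `σ`. -/
def Good (ψ : ℕ → SigmaP2 arity) (σ : List ℕ) (p : ℕ) : Prop :=
  ∃ v, decodeTup (ψ p.unpair.1).m p.unpair.2 = some v ∧
    (∀ idx, Nat.pair 1 (v idx) ∈ σ) ∧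
    atomSeen σ v (ψ p.unpair.1).α ∧
    ∀ j < σ.length, ∀ wc < σ.length,
      ∀ k (b : PAtom arity (Fin (ψ p.unpair.1).m ⊕ Fin k)),
      (ψ p.unpair.1).β j = some ⟨k, b⟩ →
      ∀ w, decodeTup k wc = some w →
        ¬((∀ x, Nat.pair 1 (w x) ∈ σ) ∧ atomSeen σ (Sum.elim v w) b)

/-- `p` codes a genuine witness for `ψ (p.unpair.1)` in `S`. -/
def IsTrue (ψ : ℕ → SigmaP2 arity) (S : Str arity) (p : ℕ) : Prop :=
  ∃ v, decodeTup (ψ p.unpair.1).m p.unpair.2 = some v ∧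
    (∀ idx, v idx ∈ S.dom) ∧ PAtom.Sat S v (ψ p.unpair.1).α ∧
    ∀ j k (b : PAtom arity (Fin (ψ p.unpair.1).m ⊕ Fin k)),
      (ψ p.unpair.1).β j = some ⟨k, b⟩ →
      ∀ w : Fin k → ℕ, (∀ x, w x ∈ S.dom) → ¬ PAtom.Sat S (Sum.elim v w) b

lemma isTrue_sat {ψ : ℕ → SigmaP2 arity} {S : Str arity} {p : ℕ} (h : IsTrue ψ S p) :
    SigmaP2.Sat S (ψ p.unpair.1) := by
  obtain ⟨v, -, h1, h2, h3⟩ := h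
  exact ⟨v, h1, h2, h3⟩

lemma sat_isTrue {ψ : ℕ → SigmaP2 arity} {S : Str arity} {i : ℕ}
    (h : SigmaP2.Sat S (ψ i)) : ∃ p, p.unpair.1 = i ∧ IsTrue ψ S p := by
  obtain ⟨v, h1, h2, h3⟩ := h
  have key : ∀ p : ℕ, p.unpair.1 = i → p.unpair.2 = Encodable.encode (List.ofFn v) →
      p.unpair.1 = i ∧ IsTrue ψ S p := by
    intro p hp1 hp2
    refine ⟨hp1, ?_⟩
    unfold IsTrue
    rw [hp1, hp2]
    exact ⟨v, decodeTup_encode _ v, h1, h2, h3⟩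
  exact ⟨Nat.pair i (Encodable.encode (List.ofFn v)), key _ (by simp) (by simp)⟩

lemma length_initSeg (f : ℕ → ℕ) (n : ℕ) : (initSeg f n).length = n := by
  simp [initSeg]

lemma mem_initSeg {f : ℕ → ℕ} {c n : ℕ} : c ∈ initSeg f n ↔ ∃ m < n, f m = c := by
  simp [initSeg, List.mem_map, List.mem_range]

lemma initSeg_subset {f : ℕ → ℕ} {S : Str arity} (hf : Set.range f = posDiag S)
    {n : ℕ} : ∀ c ∈ initSeg f n, c ∈ posDiag S := by
  intro c hc
  obtain ⟨m, -, hm⟩ := mem_initSeg.mp hc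
  rw [← hf]; exact ⟨m, hm⟩

lemma eventually_mem_initSeg {f : ℕ → ℕ} {S : Str arity} (hf : Set.range f = posDiag S)
    {c : ℕ} (hc : c ∈ posDiag S) : ∀ᶠ n in atTop, c ∈ initSeg f n := by
  rw [← hf] at hc
  obtain ⟨m, hm⟩ := hc
  filter_upwards [Filter.eventually_gt_atTop m] with n hn
  exact mem_initSeg.mpr ⟨m, hn, hm⟩

section Iso

lemma patom_sat_iff {S T : Str arity} {g : ℕ → ℕ} (hbij : Set.BijOn g S.dom T.dom)
    (hrel : ∀ (s : ℕ) (t : Fin (arity s) → ℕ), (∀ k, t k ∈ S.dom) →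
      (S.rel s t ↔ T.rel s (fun k => g (t k))))
    {V : Type} (v : V → ℕ) (hv : ∀ x, v x ∈ S.dom) (a : PAtom arity V) :
    PAtom.Sat S v a ↔ PAtom.Sat T (fun x => g (v x)) a := by
  cases a with
  | rel s t => exact hrel s (fun k => v (t k)) (fun k => hv (t k))
  | eq x y =>
      constructor
      · rintro ⟨h1, h2⟩; exact ⟨hbij.mapsTo (hv x), congrArg g h2⟩
      · rintro ⟨h1, h2⟩; exact ⟨hv x, hbij.injOn (hv x) (hv y) h2⟩
  | ne x y =>
      constructor
      · rintro ⟨h1, h2, h3⟩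
        exact ⟨hbij.mapsTo (hv x), hbij.mapsTo (hv y), fun he => h3 (hbij.injOn (hv x) (hv y) he)⟩
      · rintro ⟨h1, h2, h3⟩
        exact ⟨hv x, hv y, fun he => h3 (congrArg g he)⟩

lemma iso_sat {S T : Str arity} (hiso : Iso S T) (ψ0 : SigmaP2 arity)
    (hs : SigmaP2.Sat S ψ0) : SigmaP2.Sat T ψ0 := by
  obtain ⟨g, hbij, hrel⟩ := hiso
  obtain ⟨v, hv, hα, hβ⟩ := hs
  refine ⟨fun idx => g (v idx), fun idx => hbij.mapsTo (hv idx), ?_, ?_⟩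
  · exact (patom_sat_iff hbij hrel v hv ψ0.α).mp hα
  · intro j k b hjb w' hw' hsat
    set w : Fin k → ℕ := fun x => Function.invFunOn g S.dom (w' x) with hw
    have hwdom : ∀ x, w x ∈ S.dom := fun x =>
      Function.invFunOn_mem ((Set.mem_image _ _ _).mp (hbij.surjOn (hw' x)))
    have hgw : ∀ x, g (w x) = w' x := fun x =>
      Function.invFunOn_eq ((Set.mem_image _ _ _).mp (hbij.surjOn (hw' x)))
    have hvw : ∀ z, Sum.elim v w z ∈ S.dom := by
      rintro (z | z); exacts [hv z, hwdom z]
    have heq : (fun z => g (Sum.elim v w z)) = Sum.elim (fun idx => g (v idx)) w' := by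
      funext z; cases z with
      | inl z => rfl
      | inr z => exact hgw z
    have : PAtom.Sat S (Sum.elim v w) b := by
      rw [patom_sat_iff hbij hrel _ hvw b, heq]
      exact hsat
    exact hβ j k b hjb w hwdom this

lemma iso_symm {S T : Str arity} (hiso : Iso S T) : Iso T S := by
  obtain ⟨g, hbij, hrel⟩ := hiso
  set g' := Function.invFunOn g S.dom with hg'
  have hinv : Set.InvOn g' g S.dom T.dom := hbij.invOn_invFunOn
  refine ⟨g', hbij.symm hinv.symm, ?_⟩
  intro s t ht
  have h1 : ∀ k, g' (t k) ∈ S.dom := fun k => Function.invFunOn_mem ((Set.mem_image _ _ _).mp (hbij.surjOn (ht k)))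
  have h2 : (fun k => g (g' (t k))) = t := funext fun k => hinv.2 (ht k)
  rw [hrel s (fun k => g' (t k)) h1, h2]

end Iso


lemma good_of_true {ψ : ℕ → SigmaP2 arity} {S : Str arity} {f : ℕ → ℕ}
    (hf : Set.range f = posDiag S) {p : ℕ} (ht : IsTrue ψ S p) :
    ∀ᶠ n in atTop, Good ψ (initSeg f n) p := by
  obtain ⟨v, hdec, hdom, hα, hβ⟩ := ht
  obtain ⟨cα, hcα, hcα'⟩ := sat_code S v _ hα
  have h1 : ∀ᶠ n in atTop, ∀ idx, Nat.pair 1 (v idx) ∈ initSeg f n :=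
    Filter.eventually_all.mpr fun idx => eventually_mem_initSeg hf (pair1_mem S (hdom idx))
  have h2 : ∀ᶠ n in atTop, cα ∈ initSeg f n := eventually_mem_initSeg hf hcα
  filter_upwards [h1, h2] with n hn1 hn2
  refine ⟨v, hdec, hn1, hcα' _ hn2, ?_⟩
  intro j _ wc _ k b hjb w hw ⟨hwmem, hseen⟩
  have hsub := initSeg_subset (n := n) hf
  have hwdom : ∀ x, w x ∈ S.dom := fun x => (pair1_mem_iff S _).mp (hsub _ (hwmem x))
  exact hβ j k b hjb w hwdom (atomSeen_sat S _ hsub _ b hseen)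

lemma notgood_of_nottrue {ψ : ℕ → SigmaP2 arity} {S : Str arity} {f : ℕ → ℕ}
    (hf : Set.range f = posDiag S) {p : ℕ} (ht : ¬ IsTrue ψ S p) :
    ∀ᶠ n in atTop, ¬ Good ψ (initSeg f n) p := by
  classical
  cases hd : decodeTup (ψ p.unpair.1).m p.unpair.2 with
  | none =>
      refine Filter.Eventually.of_forall fun n hg => ?_
      obtain ⟨v, hv, -⟩ := hg
      rw [hd] at hv; exact nomatch hv
  | some v =>
      by_cases hA : (∀ idx, v idx ∈ S.dom) ∧ PAtom.Sat S v (ψ p.unpair.1).α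
      · -- the β-clause of IsTrue must fail
        have hC : ¬ ∀ j k (b : PAtom arity (Fin (ψ p.unpair.1).m ⊕ Fin k)),
            (ψ p.unpair.1).β j = some ⟨k, b⟩ →
            ∀ w : Fin k → ℕ, (∀ x, w x ∈ S.dom) → ¬ PAtom.Sat S (Sum.elim v w) b := by
          intro hC; exact ht ⟨v, hd, hA.1, hA.2, hC⟩
        push_neg at hC
        obtain ⟨j, k, b, hjb, w, hwdom, hsat⟩ := hC
        obtain ⟨cb, hcb, hcb'⟩ := sat_code S _ _ hsat
        have h1 : ∀ᶠ n in atTop, ∀ x, Nat.pair 1 (w x) ∈ initSeg f n :=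
          Filter.eventually_all.mpr fun x => eventually_mem_initSeg hf (pair1_mem S (hwdom x))
        have h2 : ∀ᶠ n in atTop, cb ∈ initSeg f n := eventually_mem_initSeg hf hcb
        have h3 : ∀ᶠ n in atTop, j < n := Filter.eventually_gt_atTop j
        have h4 : ∀ᶠ n in atTop, Encodable.encode (List.ofFn w) < n :=
          Filter.eventually_gt_atTop _
        filter_upwards [h1, h2, h3, h4] with n hn1 hn2 hn3 hn4 hg
        obtain ⟨v', hv', -, -, hgβ⟩ := hg
        rw [hd] at hv'
        obtain rfl : v = v' := Option.some.inj hv'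
        rw [length_initSeg] at hgβ
        exact hgβ j hn3 _ hn4 k b hjb w (decodeTup_encode k w) ⟨hn1, hcb' _ hn2⟩
      · refine Filter.Eventually.of_forall fun n hg => ?_
        obtain ⟨v', hv', hgdom, hgα, -⟩ := hg
        rw [hd] at hv'
        obtain rfl : v = v' := Option.some.inj hv'
        have hsub := initSeg_subset (n := n) hf
        exact hA ⟨fun idx => (pair1_mem_iff S _).mp (hsub _ (hgdom idx)),
          atomSeen_sat S _ hsub _ _ hgα⟩

end Stmt14

/-- if each member `B i` of the family `𝔎 = {B i : i ∈ ℕ}` is uniquely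
distinguished within `𝔎` by a Σᵖ₂ sentence `ψ i` of the form
`∃x̄ (α(x̄) ∧ ⋀_j ∀ȳ ¬β_j(x̄,ȳ))` with `α`, `β_j` positive atomic (i.e.
`B j ⊨ ψ i ↔ i = j`), then `𝔎` is TxtEx-learnable: some learner `M` converges to
`some i` on every text (enumeration of the positive atomic diagram) of every isomorphic
copy of `B i` with domain `⊆ ℕ`. -/
theorem sigmaP2_distinguished_implies_txtEx_learnable
    (arity : ℕ → ℕ) (B : ℕ → Str arity) (ψ : ℕ → SigmaP2 arity)
    (h : ∀ i j, SigmaP2.Sat (B j) (ψ i) ↔ i = j) :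
    ∃ M : List ℕ → Option ℕ,
      ∀ (i : ℕ) (S : Str arity), Iso S (B i) →
        ∀ f : ℕ → ℕ, Set.range f = posDiag S →
          ∃ N, ∀ n ≥ N, M (initSeg f n) = some i := by
  classical
  open Stmt14 Filter in
  refine ⟨fun σ => if hg : ∃ p, p < σ.length ∧ Good ψ σ p
    then some (Nat.find hg).unpair.1 else none, ?_⟩
  intro i S hiso f hf
  have hSsat : ∀ i', SigmaP2.Sat S (ψ i') → i' = i := fun i' hs =>
    (h i' i).mp (iso_sat hiso _ hs)
  have hSi : SigmaP2.Sat S (ψ i) := iso_sat (iso_symm hiso) _ ((h i i).mpr rfl)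
  have hex : ∃ p, IsTrue ψ S p := by
    obtain ⟨p, -, hp⟩ := sat_isTrue hSi; exact ⟨p, hp⟩
  set p0 := Nat.find hex with hp0
  have htrue : IsTrue ψ S p0 := Nat.find_spec hex
  have hi0 : p0.unpair.1 = i := hSsat _ (isTrue_sat htrue)
  have h1 : ∀ᶠ n in atTop, Good ψ (initSeg f n) p0 := good_of_true hf htrue
  have h2 : ∀ᶠ n in atTop, ∀ p ∈ Finset.range p0, ¬ Good ψ (initSeg f n) p :=
    (Filter.eventually_all_finset (Finset.range p0)).mpr fun p hp =>
      notgood_of_nottrue hf (Nat.find_min hex (Finset.mem_range.mp hp))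
  have h3 : ∀ᶠ n in atTop, p0 < n := Filter.eventually_gt_atTop p0
  obtain ⟨N, hN⟩ := Filter.eventually_atTop.mp (h1.and (h2.and h3))
  refine ⟨N, fun n hn => ?_⟩
  obtain ⟨hg0, hbad, hlt⟩ := hN n hn
  have hg : ∃ p, p < (initSeg f n).length ∧ Good ψ (initSeg f n) p :=
    ⟨p0, by rw [length_initSeg]; exact hlt, hg0⟩
  dsimp only
  rw [dif_pos hg]
  have hle : Nat.find hg ≤ p0 := Nat.find_min' hg ⟨by rw [length_initSeg]; exact hlt, hg0⟩
  have heq : Nat.find hg = p0 := by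
    rcases lt_or_eq_of_le hle with hlt' | he
    · exact absurd (Nat.find_spec hg).2 (hbad _ (Finset.mem_range.mpr hlt'))
    · exact he
  rw [heq, hi0]
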